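/- Let A ∈ M_d(K) be nilpotent with index of nilpotency n (A^n = 0 ≠ A^{n-1}) and v the number of distinct Jordan block sizes of A. Then the Jacobson radical of Cen(A) is nilpotent of index at most n·v, i.e., J(Cen(A))^{nv} = 0. -/

import Mathlib

open Matrix in
lemma jac_matrix {K : Type*} [Field K] {ι : Type*} [Fintype ι] [DecidableEq ι]
    (M : Matrix ι ι K) (hM : M ∈ Ideal.jacobson (⊥ : Ideal (Matrix ι ι K))) : M = 0 := by
  by_contra hM0
  obtain ⟨i0, j0, hij⟩ : ∃ i0 j0, M i0 j0 ≠ 0 := by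
    by_contra h; push_neg at h; exact hM0 (by ext i j; simp [h i j])
  set w : ι → K := Pi.single j0 1 with hw
  have hMw : M.mulVec w = fun i => M i j0 := by
    ext i; simp [hw, mulVec_single]
  set L : Ideal (Matrix ι ι K) :=
    { carrier := {N | N.mulVec w = 0}
      add_mem' := fun {a b} ha hb => by
        simp only [Set.mem_setOf_eq] at *; rw [add_mulVec, ha, hb, add_zero]
      zero_mem' := by simp [zero_mulVec]
      smul_mem' := fun c {N} hN => by
        simp only [Set.mem_setOf_eq, smul_eq_mul] at *
        rw [← mulVec_mulVec, hN, mulVec_zero] } with hL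
  have memL : ∀ N : Matrix ι ι K, N ∈ L ↔ N.mulVec w = 0 := fun N => Iff.rfl
  have hLmax : L.IsMaximal := by
    constructor
    constructor
    · intro htop
      have h1 : (1 : Matrix ι ι K) ∈ L := htop ▸ Submodule.mem_top
      rw [memL, one_mulVec] at h1
      have := congrFun h1 j0
      simp [hw] at this
    · intro J hLJ
      obtain ⟨N, hNJ, hNL⟩ := Set.exists_of_ssubset hLJ
      rw [Submodule.eq_top_iff']
      intro P
      set u := N.mulVec w with hu
      have hu0 : u ≠ 0 := fun h => hNL ((memL N).mpr h)
      obtain ⟨i1, hi1⟩ : ∃ i1, u i1 ≠ 0 := by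
        by_contra h; push_neg at h; exact hu0 (funext h)
      set Q : Matrix ι ι K := fun i j => P.mulVec w i * (if j = i1 then (u i1)⁻¹ else 0) with hQ
      have hQN : (Q * N).mulVec w = P.mulVec w := by
        rw [← mulVec_mulVec]
        ext i
        show ∑ j, Q i j * u j = _
        rw [Finset.sum_eq_single i1 (fun b _ hb => by simp [hQ, hb])
          (fun h => absurd (Finset.mem_univ i1) h)]
        show (P *ᵥ w) i * (if i1 = i1 then (u i1)⁻¹ else 0) * u i1 = _
        rw [if_pos rfl, mul_assoc, inv_mul_cancel₀ hi1, mul_one]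
      have h1 : P - Q * N ∈ L := by rw [memL, sub_mulVec, hQN, sub_self]
      have h2 : Q * N ∈ J := J.smul_mem Q hNJ
      have := J.add_mem (hLJ.le h1) h2
      simpa using this
  have hML : M ∈ L :=
    Ideal.mem_sInf.mp hM
      (show (⊥ : Ideal (Matrix ι ι K)) ≤ L ∧ L.IsMaximal from ⟨bot_le, hLmax⟩)
  rw [memL, hMw] at hML
  exact hij (congrFun hML i0)

namespace Stmt17Aux


variable {K : Type*} [Field K] {d : ℕ} {m : ℕ}

/-- iterated image of a chain vector -/
noncomputable def bb (A : Matrix (Fin d) (Fin d) K) (x : Fin m → (Fin d → K))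
    (δ : Fin m) (t : ℕ) : Fin d → K :=
  ((Matrix.toLin' A) ^ t) (x δ)

variable {A : Matrix (Fin d) (Fin d) K} {k : Fin m → ℕ} {x : Fin m → (Fin d → K)}
  {b : Module.Basis ((γ : Fin m) × Fin (k γ)) K (Fin d → K)}

lemma bb_eq_b (hb : ∀ p : (γ : Fin m) × Fin (k γ), b p = ((Matrix.toLin' A) ^ ((p.2 : ℕ))) (x p.1))
    (p : (γ : Fin m) × Fin (k γ)) : bb A x p.1 (p.2 : ℕ) = b p := (hb p).symm

lemma bb_ge (hzero : ∀ γ, ((Matrix.toLin' A) ^ (k γ)) (x γ) = 0)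
    {δ : Fin m} {t : ℕ} (h : k δ ≤ t) : bb A x δ t = 0 := by
  unfold bb
  rw [show t = (t - k δ) + k δ from (Nat.sub_add_cancel h).symm, pow_add]
  simp only [Module.End.mul_apply, hzero δ, map_zero]

lemma bb_step (δ : Fin m) (t : ℕ) :
    Matrix.toLin' A (bb A x δ t) = bb A x δ (t + 1) := by
  unfold bb
  rw [pow_succ']
  rfl

lemma repr_bb (hb : ∀ p : (γ : Fin m) × Fin (k γ), b p = ((Matrix.toLin' A) ^ ((p.2 : ℕ))) (x p.1))
    (hzero : ∀ γ, ((Matrix.toLin' A) ^ (k γ)) (x γ) = 0)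
    (δ : Fin m) (t : ℕ) (r : (γ : Fin m) × Fin (k γ)) :
    b.repr (bb A x δ t) r =
      if h : t < k δ then (if (⟨δ, ⟨t, h⟩⟩ : (γ : Fin m) × Fin (k γ)) = r then 1 else 0)
      else 0 := by
  split
  · next h =>
    rw [show bb A x δ t = b ⟨δ, ⟨t, h⟩⟩ from bb_eq_b hb ⟨δ, ⟨t, h⟩⟩]
    rw [b.repr_self]
    exact Finsupp.single_apply
  · next h =>
    rw [bb_ge hzero (Nat.le_of_not_lt h)]
    simp




variable {K : Type*} [Field K] {d : ℕ} {m : ℕ}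
variable {A : Matrix (Fin d) (Fin d) K} {k : Fin m → ℕ} {x : Fin m → (Fin d → K)}
  {b : Module.Basis ((γ : Fin m) × Fin (k γ)) K (Fin d → K)}

/-- coefficients of the action of `B` on the chain generators -/
noncomputable def cf (b : Module.Basis ((γ : Fin m) × Fin (k γ)) K (Fin d → K))
    (x : Fin m → (Fin d → K)) (B : Matrix (Fin d) (Fin d) K) (γ : Fin m)
    (q : (γ : Fin m) × Fin (k γ)) : K :=
  b.repr (Matrix.toLin' B (x γ)) q

lemma comm_pow {B : Matrix (Fin d) (Fin d) K} (hAB : A * B = B * A) (t : ℕ)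
    (w : Fin d → K) :
    ((Matrix.toLin' A) ^ t) (Matrix.toLin' B w) =
      Matrix.toLin' B (((Matrix.toLin' A) ^ t) w) := by
  induction t generalizing w with
  | zero => simp
  | succ t ih =>
    rw [pow_succ, Module.End.mul_apply, Module.End.mul_apply,
      ← Matrix.toLin'_mul_apply, hAB, Matrix.toLin'_mul_apply, ih]

lemma expand (hb : ∀ p : (γ : Fin m) × Fin (k γ), b p = ((Matrix.toLin' A) ^ ((p.2 : ℕ))) (x p.1))
    (B : Matrix (Fin d) (Fin d) K) (γ : Fin m) (t : ℕ) :
    ((Matrix.toLin' A) ^ t) (Matrix.toLin' B (x γ)) =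
      ∑ q : (γ : Fin m) × Fin (k γ), cf b x B γ q • bb A x q.1 (t + (q.2 : ℕ)) := by
  conv_lhs => rw [← b.sum_repr (Matrix.toLin' B (x γ))]
  rw [map_sum]
  refine Finset.sum_congr rfl fun q _ => ?_
  rw [map_smul]
  congr 1
  rw [hb q]
  show ((Matrix.toLin' A) ^ t) (((Matrix.toLin' A) ^ (q.2 : ℕ)) (x q.1)) = _
  rw [← Module.End.mul_apply, ← pow_add]
  rfl

lemma expandB (hb : ∀ p : (γ : Fin m) × Fin (k γ), b p = ((Matrix.toLin' A) ^ ((p.2 : ℕ))) (x p.1))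
    {B : Matrix (Fin d) (Fin d) K} (hAB : A * B = B * A) (p : (γ : Fin m) × Fin (k γ)) :
    Matrix.toLin' B (b p) =
      ∑ q : (γ : Fin m) × Fin (k γ), cf b x B p.1 q • bb A x q.1 ((p.2 : ℕ) + (q.2 : ℕ)) := by
  rw [hb p, ← comm_pow hAB, expand hb]

/-- vanishing of low coefficients towards longer chains -/
lemma cf_eq_zero_of_lt
    (hb : ∀ p : (γ : Fin m) × Fin (k γ), b p = ((Matrix.toLin' A) ^ ((p.2 : ℕ))) (x p.1))
    (hzero : ∀ γ, ((Matrix.toLin' A) ^ (k γ)) (x γ) = 0)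
    {B : Matrix (Fin d) (Fin d) K} (hAB : A * B = B * A) (γ δ : Fin m) (j : Fin (k δ))
    (hlt : (j : ℕ) + k γ < k δ) : cf b x B γ ⟨δ, j⟩ = 0 := by
  have h0 : (0 : Fin d → K) =
      ∑ q : (γ : Fin m) × Fin (k γ), cf b x B γ q • bb A x q.1 (k γ + (q.2 : ℕ)) := by
    rw [← expand hb, comm_pow hAB, hzero γ, map_zero]
  have hkj : k γ + (j : ℕ) < k δ := by omega
  have := congrArg (fun z => b.repr z (⟨δ, ⟨k γ + (j : ℕ), hkj⟩⟩ : (γ : Fin m) × Fin (k γ))) h0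
  simp only [map_zero, Finsupp.coe_zero, Pi.zero_apply, map_sum, map_smul,
    Finsupp.coe_finset_sum, Finset.sum_apply, Finsupp.coe_smul, Pi.smul_apply,
    smul_eq_mul] at this
  rw [Finset.sum_eq_single (⟨δ, j⟩ : (γ : Fin m) × Fin (k γ))] at this
  · rw [repr_bb hb hzero, dif_pos hkj, if_pos rfl, mul_one] at this
    exact this.symm
  · intro q _ hq
    rw [repr_bb hb hzero]
    split
    · next h =>
      rw [if_neg, mul_zero]
      intro hEq
      apply hq
      obtain ⟨h1, h2⟩ := Sigma.mk.inj_iff.mp hEq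
      subst h1
      have : k γ + (q.2 : ℕ) = k γ + (j : ℕ) := by
        have := (Fin.heq_ext_iff rfl).mp h2
        simpa using this
      have hq2 : (q.2 : ℕ) = (j : ℕ) := by omega
      exact Sigma.ext rfl (heq_of_eq (Fin.ext hq2))
    · rw [mul_zero]
  · intro h; exact absurd (Finset.mem_univ _) h



variable {K : Type*} [Field K] {d : ℕ} {m : ℕ}

def gg (k : Fin m → ℕ) (s : ℕ) : ℕ :=
  ((Finset.univ.image k).filter (fun t => s < t)).card

lemma gg_lt_card (k : Fin m → ℕ) (γ : Fin m) :
    gg k (k γ) < (Finset.univ.image k).card := by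
  apply Finset.card_lt_card
  constructor
  · exact Finset.filter_subset _ _
  · intro hsub
    have h1 : k γ ∈ Finset.univ.image k := Finset.mem_image_of_mem k (Finset.mem_univ γ)
    have h2 := hsub h1
    simp only [Finset.mem_filter] at h2
    omega

lemma gg_mono (k : Fin m → ℕ) {γ δ : Fin m} (h : k δ < k γ) :
    gg k (k γ) < gg k (k δ) := by
  apply Finset.card_lt_card
  constructor
  · intro t ht
    simp only [Finset.mem_filter] at *
    exact ⟨ht.1, by omega⟩
  · intro hsub
    have h1 : k γ ∈ (Finset.univ.image k).filter (fun t => k δ < t) := by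
      simp only [Finset.mem_filter]
      exact ⟨Finset.mem_image_of_mem k (Finset.mem_univ γ), h⟩
    have h2 := hsub h1
    simp only [Finset.mem_filter] at h2
    omega

variable {k : Fin m → ℕ}

/-- weight -/
def μ (k : Fin m → ℕ) (v : ℕ) (p : (γ : Fin m) × Fin (k γ)) : ℕ :=
  v * (p.2 : ℕ) + gg k (k p.1)

/-- filtration -/
def W (b : Module.Basis ((γ : Fin m) × Fin (k γ)) K (Fin d → K)) (v : ℕ) (j : ℕ) :
    Submodule K (Fin d → K) :=
  Submodule.span K (b '' {p | j ≤ μ k v p})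

lemma W_antitone (b : Module.Basis ((γ : Fin m) × Fin (k γ)) K (Fin d → K)) (v : ℕ)
    {j j' : ℕ} (h : j ≤ j') : W b v j' ≤ W b v j :=
  Submodule.span_mono (Set.image_mono fun p hp => le_trans h hp)

lemma W_zero (b : Module.Basis ((γ : Fin m) × Fin (k γ)) K (Fin d → K)) (v : ℕ) :
    W b v 0 = ⊤ := by
  rw [← b.span_eq]
  unfold W
  congr 1
  rw [show {p : (γ : Fin m) × Fin (k γ) | 0 ≤ μ k v p} = Set.univ from
    Set.eq_univ_of_forall fun p => Nat.zero_le _, Set.image_univ]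

lemma mem_W (b : Module.Basis ((γ : Fin m) × Fin (k γ)) K (Fin d → K)) (v : ℕ) {j : ℕ}
    {p : (γ : Fin m) × Fin (k γ)} (h : j ≤ μ k v p) : b p ∈ W b v j :=
  Submodule.subset_span ⟨p, h, rfl⟩

lemma W_bot (b : Module.Basis ((γ : Fin m) × Fin (k γ)) K (Fin d → K)) {v n : ℕ}
    (hv : v = (Finset.univ.image k).card)
    (hkn : ∀ γ, k γ ≤ n) : W b v (n * v) = ⊥ := by
  unfold W
  rw [show {p : (γ : Fin m) × Fin (k γ) | n * v ≤ μ k v p} = ∅ from ?_]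
  · simp
  · rw [Set.eq_empty_iff_forall_notMem]
    intro p hp
    simp only [Set.mem_setOf_eq] at hp
    have h1 : gg k (k p.1) < v := hv ▸ gg_lt_card k p.1
    have h2 : (p.2 : ℕ) < k p.1 := p.2.isLt
    have h3 : k p.1 ≤ n := hkn p.1
    have h4 : v * ((p.2 : ℕ) + 1) ≤ v * n := Nat.mul_le_mul_left v (by omega)
    have h5 : v * ((p.2 : ℕ) + 1) = v * (p.2 : ℕ) + v := by ring
    have : μ k v p = v * (p.2 : ℕ) + gg k (k p.1) := rfl
    rw [this] at hp
    have : n * v = v * n := Nat.mul_comm n v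
    omega



variable {K : Type*} [Field K] {d : ℕ} {m : ℕ}
variable {A : Matrix (Fin d) (Fin d) K} {k : Fin m → ℕ} {x : Fin m → (Fin d → K)}
  {b : Module.Basis ((γ : Fin m) × Fin (k γ)) K (Fin d → K)}

lemma step_mem
    (hb : ∀ p : (γ : Fin m) × Fin (k γ), b p = ((Matrix.toLin' A) ^ ((p.2 : ℕ))) (x p.1))
    (hzero : ∀ γ, ((Matrix.toLin' A) ^ (k γ)) (x γ) = 0)
    (hk1 : ∀ γ, 1 ≤ k γ)
    {v : ℕ} (hv : v = (Finset.univ.image k).card)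
    {B : Matrix (Fin d) (Fin d) K} (hAB : A * B = B * A)
    (hπ : ∀ γ δ, k δ = k γ → cf b x B γ ⟨δ, ⟨0, hk1 δ⟩⟩ = 0)
    (p : (γ : Fin m) × Fin (k γ)) :
    Matrix.toLin' B (b p) ∈ W b v (μ k v p + 1) := by
  rw [expandB hb hAB p]
  apply Submodule.sum_mem
  intro q _
  by_cases hc : cf b x B p.1 q = 0
  · rw [hc, zero_smul]; exact Submodule.zero_mem _
  by_cases h1 : (p.2 : ℕ) + (q.2 : ℕ) < k q.1
  · rw [show bb A x q.1 ((p.2 : ℕ) + (q.2 : ℕ)) = b ⟨q.1, ⟨_, h1⟩⟩ from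
      bb_eq_b hb ⟨q.1, ⟨_, h1⟩⟩]
    apply Submodule.smul_mem
    apply mem_W
    show μ k v p + 1 ≤ v * ((p.2 : ℕ) + (q.2 : ℕ)) + gg k (k q.1)
    have hμ : μ k v p = v * (p.2 : ℕ) + gg k (k p.1) := rfl
    rcases lt_trichotomy (k q.1) (k p.1) with hlt | heq | hgt
    · have hg := gg_mono k hlt
      have h4 : v * (p.2 : ℕ) ≤ v * ((p.2 : ℕ) + (q.2 : ℕ)) :=
        Nat.mul_le_mul_left v (by omega)
      omega
    · -- same size: q.2 ≥ 1
      have hq2 : 1 ≤ (q.2 : ℕ) := by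
        by_contra hq0
        have : (q.2 : ℕ) = 0 := by omega
        apply hc
        have : q = ⟨q.1, ⟨0, hk1 q.1⟩⟩ := Sigma.ext rfl (heq_of_eq (Fin.ext this))
        rw [this]
        exact hπ p.1 q.1 heq
      have hglt : gg k (k p.1) < v := hv ▸ gg_lt_card k p.1
      have h4 : v * ((p.2 : ℕ) + 1) ≤ v * ((p.2 : ℕ) + (q.2 : ℕ)) :=
        Nat.mul_le_mul_left v (by omega)
      have h5 : v * ((p.2 : ℕ) + 1) = v * (p.2 : ℕ) + v := by ring
      have hgeq : gg k (k q.1) = gg k (k p.1) := by rw [heq]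
      omega
    · -- bigger size: q.2 ≥ k q.1 - k p.1 ≥ 1
      have hq2 : 1 ≤ (q.2 : ℕ) := by
        by_contra hq0
        have h0 : (q.2 : ℕ) + k p.1 < k q.1 := by omega
        exact hc (show cf b x B p.1 ⟨q.1, q.2⟩ = 0 from
          cf_eq_zero_of_lt hb hzero hAB p.1 q.1 q.2 h0)
      have hglt : gg k (k p.1) < v := hv ▸ gg_lt_card k p.1
      have h4 : v * ((p.2 : ℕ) + 1) ≤ v * ((p.2 : ℕ) + (q.2 : ℕ)) :=
        Nat.mul_le_mul_left v (by omega)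
      have h5 : v * ((p.2 : ℕ) + 1) = v * (p.2 : ℕ) + v := by ring
      omega
  · rw [bb_ge hzero (by omega), smul_zero]
    exact Submodule.zero_mem _

lemma mapsTo_W
    (hb : ∀ p : (γ : Fin m) × Fin (k γ), b p = ((Matrix.toLin' A) ^ ((p.2 : ℕ))) (x p.1))
    (hzero : ∀ γ, ((Matrix.toLin' A) ^ (k γ)) (x γ) = 0)
    (hk1 : ∀ γ, 1 ≤ k γ)
    {v : ℕ} (hv : v = (Finset.univ.image k).card)
    {B : Matrix (Fin d) (Fin d) K} (hAB : A * B = B * A)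
    (hπ : ∀ γ δ, k δ = k γ → cf b x B γ ⟨δ, ⟨0, hk1 δ⟩⟩ = 0)
    (j : ℕ) {w : Fin d → K} (hw : w ∈ W b v j) :
    Matrix.toLin' B w ∈ W b v (j + 1) := by
  induction hw using Submodule.span_induction with
  | mem w hwmem =>
    obtain ⟨p, hp, rfl⟩ := hwmem
    simp only [Set.mem_setOf_eq] at hp
    exact W_antitone b v (by omega : j + 1 ≤ μ k v p + 1)
      (step_mem hb hzero hk1 hv hAB hπ p)
  | zero => rw [map_zero]; exact Submodule.zero_mem _
  | add u w _ _ hu hw => rw [map_add]; exact Submodule.add_mem _ hu hw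
  | smul c u _ hu => rw [map_smul]; exact Submodule.smul_mem _ c hu


lemma toLin'_pow (A : Matrix (Fin d) (Fin d) K) (t : ℕ) :
    Matrix.toLin' (A ^ t) = (Matrix.toLin' A) ^ t := by
  induction t with
  | zero => rw [pow_zero, pow_zero, Matrix.toLin'_one]; rfl
  | succ t ih => rw [pow_succ, pow_succ, Matrix.toLin'_mul, ih]; rfl

lemma smk_eq {γ δ : Fin m} {i : Fin (k γ)} {j : Fin (k δ)} :
    (⟨γ, i⟩ : (γ : Fin m) × Fin (k γ)) = ⟨δ, j⟩ ↔ γ = δ ∧ (i : ℕ) = (j : ℕ) := by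
  constructor
  · intro h
    obtain ⟨h1, h2⟩ := Sigma.mk.inj_iff.mp h
    subst h1
    refine ⟨rfl, ?_⟩
    exact (Fin.heq_ext_iff rfl).mp h2
  · rintro ⟨rfl, h2⟩
    exact Sigma.ext rfl (heq_of_eq (Fin.ext h2))

/-- the key "matrix entry at level 0" computation -/
lemma repr0
    (hb : ∀ p : (γ : Fin m) × Fin (k γ), b p = ((Matrix.toLin' A) ^ ((p.2 : ℕ))) (x p.1))
    (hzero : ∀ γ, ((Matrix.toLin' A) ^ (k γ)) (x γ) = 0)
    (hk1 : ∀ γ, 1 ≤ k γ)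
    {B : Matrix (Fin d) (Fin d) K} (hAB : A * B = B * A)
    (q : (γ : Fin m) × Fin (k γ)) (δ : Fin m) :
    b.repr (Matrix.toLin' B (b q)) ⟨δ, ⟨0, hk1 δ⟩⟩ =
      if (q.2 : ℕ) = 0 then cf b x B q.1 ⟨δ, ⟨0, hk1 δ⟩⟩ else 0 := by
  rw [expandB hb hAB q]
  simp only [map_sum, map_smul, Finsupp.coe_finset_sum, Finset.sum_apply,
    Finsupp.coe_smul, Pi.smul_apply, smul_eq_mul]
  rw [Finset.sum_eq_single (⟨δ, ⟨0, hk1 δ⟩⟩ : (γ : Fin m) × Fin (k γ))]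
  · rw [repr_bb hb hzero]
    by_cases hq0 : (q.2 : ℕ) = 0
    · rw [dif_pos (by have := hk1 δ; omega : (q.2 : ℕ) + (0 : ℕ) < k δ), if_pos,
        if_pos hq0, mul_one]
      exact smk_eq.mpr ⟨rfl, by simp only [Fin.val_mk]; omega⟩
    · rw [if_neg hq0]
      split
      · rw [if_neg, mul_zero]
        intro hEq
        exact hq0 (by simpa using (smk_eq.mp hEq).2)
      · rw [mul_zero]
  · intro r _ hr
    rw [repr_bb hb hzero]
    split
    · rw [if_neg, mul_zero]
      intro hEq
      obtain ⟨h1, h2⟩ := smk_eq.mp hEq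
      have h2' : (q.2 : ℕ) + (r.2 : ℕ) = 0 := by simpa using h2
      exact hr (smk_eq.mpr ⟨h1, by simp only [Fin.val_mk]; omega⟩)
    · rw [mul_zero]
  · intro h; exact absurd (Finset.mem_univ _) h

variable (b) in
/-- the "size-s diagonal block" homomorphism -/
noncomputable def piS
    (hb : ∀ p : (γ : Fin m) × Fin (k γ), b p = ((Matrix.toLin' A) ^ ((p.2 : ℕ))) (x p.1))
    (hzero : ∀ γ, ((Matrix.toLin' A) ^ (k γ)) (x γ) = 0)
    (hk1 : ∀ γ, 1 ≤ k γ) (s : ℕ) :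
    Subalgebra.centralizer K ({A} : Set (Matrix (Fin d) (Fin d) K)) →+*
      Matrix {γ : Fin m // k γ = s} {γ : Fin m // k γ = s} K where
  toFun B := fun δ' γ' => cf b x (B : Matrix (Fin d) (Fin d) K) γ'.1 ⟨δ'.1, ⟨0, hk1 δ'.1⟩⟩
  map_one' := by
    ext δ' γ'
    show cf b x (1 : Matrix (Fin d) (Fin d) K) γ'.1 ⟨δ'.1, ⟨0, hk1 δ'.1⟩⟩ = _
    unfold cf
    rw [Matrix.toLin'_one]
    have hx : x γ'.1 = b ⟨γ'.1, ⟨0, hk1 γ'.1⟩⟩ := by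
      rw [hb]; simp
    rw [LinearMap.id_apply, hx, b.repr_self, Matrix.one_apply, Finsupp.single_apply]
    by_cases h : δ' = γ'
    · subst h; rw [if_pos rfl, if_pos rfl]
    · rw [if_neg, if_neg h]
      intro hEq
      exact h (Subtype.ext (smk_eq.mp hEq).1.symm)
  map_mul' := by
    intro B C
    ext δ' γ'
    show cf b x ((B : Matrix (Fin d) (Fin d) K) * C) γ'.1 ⟨δ'.1, ⟨0, hk1 δ'.1⟩⟩ = _
    have hAB : A * (B : Matrix (Fin d) (Fin d) K) = B * A := by
      have := B.2; rw [Subalgebra.mem_centralizer_iff] at this; exact this A rfl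
    unfold cf
    rw [Matrix.toLin'_mul_apply]
    conv_lhs => rw [← b.sum_repr (Matrix.toLin' (C : Matrix (Fin d) (Fin d) K) (x γ'.1))]
    simp only [map_sum, map_smul, Finsupp.coe_finset_sum, Finset.sum_apply,
      Finsupp.coe_smul, Pi.smul_apply, smul_eq_mul]
    have hterm : ∀ q : (γ : Fin m) × Fin (k γ),
        b.repr (Matrix.toLin' (B : Matrix (Fin d) (Fin d) K) (b q)) ⟨δ'.1, ⟨0, hk1 δ'.1⟩⟩ =
        if (q.2 : ℕ) = 0 then cf b x (B : Matrix (Fin d) (Fin d) K) q.1 ⟨δ'.1, ⟨0, hk1 δ'.1⟩⟩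
        else 0 := fun q => repr0 hb hzero hk1 hAB q δ'.1
    simp only [hterm]
    rw [← Finset.univ_sigma_univ, Finset.sum_sigma]
    have hAC : A * (C : Matrix (Fin d) (Fin d) K) = C * A := by
      have := C.2; rw [Subalgebra.mem_centralizer_iff] at this; exact this A rfl
    have hinner : ∀ a : Fin m,
        (∑ i : Fin (k a), b.repr (Matrix.toLin' (C : Matrix (Fin d) (Fin d) K) (x γ'.1)) ⟨a, i⟩ *
          if ((⟨a, i⟩ : (γ : Fin m) × Fin (k γ)).2 : ℕ) = 0 then
            cf b x (B : Matrix (Fin d) (Fin d) K) a ⟨δ'.1, ⟨0, hk1 δ'.1⟩⟩ else 0) =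
        cf b x (C : Matrix (Fin d) (Fin d) K) γ'.1 ⟨a, ⟨0, hk1 a⟩⟩ *
          cf b x (B : Matrix (Fin d) (Fin d) K) a ⟨δ'.1, ⟨0, hk1 δ'.1⟩⟩ := by
      intro a
      rw [Finset.sum_eq_single (⟨0, hk1 a⟩ : Fin (k a))]
      · rw [if_pos rfl]; rfl
      · intro i _ hi
        rw [if_neg, mul_zero]
        intro hval
        exact hi (Fin.ext (by simpa using hval))
      · intro h; exact absurd (Finset.mem_univ _) h
    simp only [hinner]
    have hzero2 : ∀ a : Fin m, a ∈ Finset.univ → ¬ (k a = s) →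
        cf b x (C : Matrix (Fin d) (Fin d) K) γ'.1 ⟨a, ⟨0, hk1 a⟩⟩ *
          cf b x (B : Matrix (Fin d) (Fin d) K) a ⟨δ'.1, ⟨0, hk1 δ'.1⟩⟩ = 0 := by
      intro a _ ha
      rcases Nat.lt_or_ge (k a) s with hlt | hge
      · have hlt' : k a < k δ'.1 := by rw [δ'.2]; exact hlt
        rw [show cf b x (B : Matrix (Fin d) (Fin d) K) a ⟨δ'.1, ⟨0, hk1 δ'.1⟩⟩ = 0 from
          cf_eq_zero_of_lt hb hzero hAB a δ'.1 _ (by simp only [Fin.val_mk]; omega), mul_zero]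
      · have hgt : k γ'.1 < k a := by have := γ'.2; omega
        rw [show cf b x (C : Matrix (Fin d) (Fin d) K) γ'.1 ⟨a, ⟨0, hk1 a⟩⟩ = 0 from
          cf_eq_zero_of_lt hb hzero hAC γ'.1 a _ (by simp only [Fin.val_mk]; omega), zero_mul]
    rw [← Finset.sum_filter_of_ne (fun a ha hne => by_contra fun hns => hne (hzero2 a ha hns)),
      Finset.sum_subtype (p := fun a => k a = s) (Finset.univ.filter fun a => k a = s) (by simp)
        (fun a => cf b x (C : Matrix (Fin d) (Fin d) K) γ'.1 ⟨a, ⟨0, hk1 a⟩⟩ *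
          cf b x (B : Matrix (Fin d) (Fin d) K) a ⟨δ'.1, ⟨0, hk1 δ'.1⟩⟩)]
    refine Eq.trans ?_ Matrix.mul_apply.symm
    exact Finset.sum_congr rfl fun ε _ => mul_comm _ _
  map_zero' := by
    ext δ' γ'
    show cf b x ((0 : Subalgebra.centralizer K ({A} : Set (Matrix (Fin d) (Fin d) K))) :
      Matrix (Fin d) (Fin d) K) γ'.1 ⟨δ'.1, ⟨0, hk1 δ'.1⟩⟩ = _
    unfold cf
    simp
  map_add' := by
    intro B C
    ext δ' γ'
    show cf b x ((B : Matrix (Fin d) (Fin d) K) + C) γ'.1 ⟨δ'.1, ⟨0, hk1 δ'.1⟩⟩ = _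
    unfold cf
    simp [map_add]
    rfl

lemma piS_surjective
    (hb : ∀ p : (γ : Fin m) × Fin (k γ), b p = ((Matrix.toLin' A) ^ ((p.2 : ℕ))) (x p.1))
    (hzero : ∀ γ, ((Matrix.toLin' A) ^ (k γ)) (x γ) = 0)
    (hk1 : ∀ γ, 1 ≤ k γ) (s : ℕ) :
    Function.Surjective (piS b hb hzero hk1 s) := by
  intro M
  classical
  set T : (Fin d → K) →ₗ[K] (Fin d → K) := b.constr K
    (fun p => if h : k p.1 = s then
      ∑ δ' : {γ : Fin m // k γ = s}, M δ' ⟨p.1, h⟩ • bb A x δ'.1 (p.2 : ℕ) else 0) with hT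
  have hTb : ∀ p : (γ : Fin m) × Fin (k γ), T (b p) =
      if h : k p.1 = s then
        ∑ δ' : {γ : Fin m // k γ = s}, M δ' ⟨p.1, h⟩ • bb A x δ'.1 (p.2 : ℕ) else 0 :=
    fun p => b.constr_basis K _ p
  -- action of T on all chain vectors, including out-of-range ones
  have hTbb : ∀ (γ : Fin m) (t : ℕ), T (bb A x γ t) =
      if h : k γ = s then
        ∑ δ' : {γ : Fin m // k γ = s}, M δ' ⟨γ, h⟩ • bb A x δ'.1 t else 0 := by
    intro γ t
    by_cases ht : t < k γ
    · rw [show bb A x γ t = b ⟨γ, ⟨t, ht⟩⟩ from bb_eq_b hb ⟨γ, ⟨t, ht⟩⟩, hTb]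
    · rw [bb_ge hzero (by omega), map_zero]
      split
      · next h =>
        rw [eq_comm]
        apply Finset.sum_eq_zero
        intro δ' _
        rw [show bb A x δ'.1 t = 0 from bb_ge hzero (by rw [δ'.2, ← h]; omega), smul_zero]
      · rfl
  set Bm : Matrix (Fin d) (Fin d) K := LinearMap.toMatrix' T with hBm
  have hTL : Matrix.toLin' Bm = T := Matrix.toLin'_toMatrix' T
  have hcomm : A * Bm = Bm * A := by
    apply Matrix.toLin'.injective
    rw [Matrix.toLin'_mul, Matrix.toLin'_mul, hTL]
    apply b.ext
    intro p
    show Matrix.toLin' A (T (b p)) = T (Matrix.toLin' A (b p))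
    have h1 : Matrix.toLin' A (b p) = bb A x p.1 ((p.2 : ℕ) + 1) := by
      rw [← bb_eq_b hb p]; exact bb_step p.1 (p.2 : ℕ)
    rw [h1, hTb p, hTbb]
    split
    · rw [map_sum]
      refine Finset.sum_congr rfl fun δ' _ => ?_
      rw [map_smul, bb_step]
    · rw [map_zero]
  have hmem : Bm ∈ Subalgebra.centralizer K ({A} : Set (Matrix (Fin d) (Fin d) K)) := by
    rw [Subalgebra.mem_centralizer_iff]
    rintro g rfl
    exact hcomm
  refine ⟨⟨Bm, hmem⟩, ?_⟩
  ext δ' γ'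
  show cf b x Bm γ'.1 ⟨δ'.1, ⟨0, hk1 δ'.1⟩⟩ = M δ' γ'
  unfold cf
  rw [hTL]  -- toLin' Bm = T
  have hx : x γ'.1 = bb A x γ'.1 0 := rfl
  rw [hx, hTbb, dif_pos γ'.2]
  have hsum : ∀ δ'' : {γ : Fin m // k γ = s},
      M δ'' ⟨γ'.1, γ'.2⟩ • bb A x δ''.1 0 = M δ'' γ' • b ⟨δ''.1, ⟨0, hk1 δ''.1⟩⟩ := by
    intro δ''
    congr 1
    rw [show bb A x δ''.1 0 = b ⟨δ''.1, ⟨0, hk1 δ''.1⟩⟩ from bb_eq_b hb ⟨δ''.1, ⟨0, hk1 δ''.1⟩⟩]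
  simp only [hsum]
  rw [map_sum]
  simp only [map_smul, Finsupp.coe_finset_sum, Finset.sum_apply, Finsupp.coe_smul,
    Pi.smul_apply, smul_eq_mul]
  rw [Finset.sum_eq_single δ']
  · rw [b.repr_self, Finsupp.single_apply, if_pos rfl, mul_one]
  · intro δ'' _ hne
    rw [b.repr_self, Finsupp.single_apply, if_neg, mul_zero]
    intro hEq
    exact hne (Subtype.ext (smk_eq.mp hEq).1)
  · intro h; exact absurd (Finset.mem_univ _) h

lemma cf_zero_of_jacobson
    (hb : ∀ p : (γ : Fin m) × Fin (k γ), b p = ((Matrix.toLin' A) ^ ((p.2 : ℕ))) (x p.1))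
    (hzero : ∀ γ, ((Matrix.toLin' A) ^ (k γ)) (x γ) = 0)
    (hk1 : ∀ γ, 1 ≤ k γ)
    (Br : Subalgebra.centralizer K ({A} : Set (Matrix (Fin d) (Fin d) K)))
    (hBr : Br ∈ Ideal.jacobson
      (⊥ : Ideal (Subalgebra.centralizer K ({A} : Set (Matrix (Fin d) (Fin d) K)))))
    (γ δ : Fin m) (hδγ : k δ = k γ) :
    cf b x (Br : Matrix (Fin d) (Fin d) K) γ ⟨δ, ⟨0, hk1 δ⟩⟩ = 0 := by
  classical
  set π := piS b hb hzero hk1 (k γ) with hπ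
  have hsurj : Function.Surjective π := piS_surjective hb hzero hk1 (k γ)
  have h1 : Br ∈ Ideal.jacobson (RingHom.ker π) := Ideal.jacobson_mono bot_le hBr
  have h2 : π Br ∈ Ideal.map π (Ideal.jacobson (RingHom.ker π)) :=
    Ideal.mem_map_of_mem π h1
  rw [Ideal.map_jacobson_of_surjective hsurj le_rfl] at h2
  have h3 : Ideal.map π (RingHom.ker π) = ⊥ := by
    rw [eq_bot_iff]
    rw [Ideal.map_le_iff_le_comap]
    intro z hz
    exact hz
  rw [h3] at h2
  have h4 : π Br = 0 := jac_matrix _ h2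
  have := congrFun (congrFun (congrArg (fun (N : Matrix {γ' : Fin m // k γ' = k γ}
    {γ' : Fin m // k γ' = k γ} K) => (N : _)) h4) ⟨δ, hδγ⟩) ⟨γ, rfl⟩
  exact this

end Stmt17Aux

open Stmt17Aux in
theorem stmt17 {K : Type*} [Field K] {d : ℕ} (A : Matrix (Fin d) (Fin d) K)
    {n : ℕ} (hn : A ^ n = 0) (hn' : A ^ (n - 1) ≠ 0) {m : ℕ}
    (k : Fin m → ℕ) (hk1 : ∀ γ, 1 ≤ k γ) (x : Fin m → (Fin d → K))
    (hzero : ∀ γ, ((Matrix.toLin' A) ^ (k γ)) (x γ) = 0)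
    (b : Module.Basis ((γ : Fin m) × Fin (k γ)) K (Fin d → K))
    (hb : ∀ p : (γ : Fin m) × Fin (k γ), b p = ((Matrix.toLin' A) ^ ((p.2 : ℕ))) (x p.1))
    (v : ℕ) (hv : v = (Finset.univ.image k).card) :
    ∀ y : Fin (n * v) → Subalgebra.centralizer K ({A} : Set (Matrix (Fin d) (Fin d) K)),
      (∀ i, y i ∈ Ideal.jacobson
        (⊥ : Ideal (Subalgebra.centralizer K ({A} : Set (Matrix (Fin d) (Fin d) K))))) →
      (List.ofFn y).prod = 0 := by
  intro y hy
  classical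
  -- the degenerate case m = 0 contradicts hn'
  rcases Nat.eq_zero_or_pos m with hm | hm
  · exfalso
    have hempty : IsEmpty ((γ : Fin m) × Fin (k γ)) := by
      subst hm
      exact ⟨fun p => Fin.elim0 p.1⟩
    have hallzero : ∀ w : Fin d → K, w = 0 := by
      intro w
      have := b.sum_repr w
      rw [Finset.univ_eq_empty, Finset.sum_empty] at this
      exact this.symm
    apply hn'
    ext i j
    have := congrFun (hallzero (fun j => (A ^ (n - 1)) i j)) j
    simpa using this
  -- every chain fits inside n
  have hkn : ∀ γ, k γ ≤ n := by
    intro γ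
    by_contra hlt
    push_neg at hlt
    have hbz : b ⟨γ, ⟨n, hlt⟩⟩ = 0 := by
      rw [hb]
      show ((Matrix.toLin' A) ^ n) (x γ) = 0
      rw [← toLin'_pow, hn]
      simp
    exact b.ne_zero _ hbz
  -- key induction on the list of radical elements
  have key : ∀ l : List (Subalgebra.centralizer K ({A} : Set (Matrix (Fin d) (Fin d) K))),
      (∀ B ∈ l, ∀ γ δ, k δ = k γ →
        cf b x (B : Matrix (Fin d) (Fin d) K) γ ⟨δ, ⟨0, hk1 δ⟩⟩ = 0) →
      ∀ (j : ℕ) (w : Fin d → K), w ∈ W b v j →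
        Matrix.toLin' ((l.prod : Subalgebra.centralizer K ({A} : Set (Matrix (Fin d) (Fin d) K)))
          : Matrix (Fin d) (Fin d) K) w ∈ W b v (j + l.length) := by
    intro l
    induction l with
    | nil =>
      intro _ j w hw
      simpa [Matrix.toLin'_one] using hw
    | cons B t ih =>
      intro hl j w hw
      have h1 : (((B :: t).prod : Subalgebra.centralizer K ({A} : Set (Matrix (Fin d) (Fin d) K)))
          : Matrix (Fin d) (Fin d) K) =
          (B : Matrix (Fin d) (Fin d) K) * ((t.prod : _) : Matrix (Fin d) (Fin d) K) := by
        rw [List.prod_cons]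
        rfl
      rw [h1, Matrix.toLin'_mul_apply]
      have h2 := ih (fun C hC => hl C (List.mem_cons_of_mem _ hC)) j w hw
      have hAB : A * (B : Matrix (Fin d) (Fin d) K) = B * A := by
        have := B.2
        rw [Subalgebra.mem_centralizer_iff] at this
        exact this A rfl
      have h3 := mapsTo_W hb hzero hk1 hv hAB (hl B (List.mem_cons_self)) _ h2
      rw [List.length_cons]
      exact h3
  have hprop : ∀ B ∈ List.ofFn y, ∀ γ δ, k δ = k γ →
      cf b x (B : Matrix (Fin d) (Fin d) K) γ ⟨δ, ⟨0, hk1 δ⟩⟩ = 0 := by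
    intro B hB γ δ hδγ
    obtain ⟨i, rfl⟩ := (List.mem_ofFn).mp hB
    exact cf_zero_of_jacobson hb hzero hk1 (y i) (hy i) γ δ hδγ
  have hfin : ∀ w : Fin d → K,
      Matrix.toLin' (((List.ofFn y).prod : _) : Matrix (Fin d) (Fin d) K) w = 0 := by
    intro w
    have hw0 : w ∈ W b v 0 := by rw [W_zero]; trivial
    have := key (List.ofFn y) hprop 0 w hw0
    rw [List.length_ofFn, zero_add] at this
    rw [W_bot b hv hkn] at this
    simpa using this
  have hmat : (((List.ofFn y).prod : _) : Matrix (Fin d) (Fin d) K) = 0 := by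
    apply Matrix.toLin'.injective
    apply LinearMap.ext
    intro w
    rw [hfin w]
    simp
  exact Subtype.ext hmat
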